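/- arXiv:2203.06842 — 3 statements merged into one kernel-verified Lean document; each statement's English description precedes it below -/
import Mathlib

section
/- Let x ∈ 𝔹 and d ∈ E satisfy ⟪A x^{m-1}, P_x d⟫ < 0, and let σ ∈ (0,1). Then there exists ᾱ > 0 such that for all α ∈ (0, ᾱ], φ(x(α)) ≤ φ(x) + σ α ⟪A x^{m-1}, P_x d⟫; in particular φ(x(α)) < φ(x) for all such α, i.e. d is a curve descent direction of φ at x. -/
open scoped RealInnerProductSpace

noncomputable section

/-- Euclidean space `ℝ^n`. -/
abbrev Euc (n : ℕ) : Type := EuclideanSpace ℝ (Fin n)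

/-- An `m`-th order tensor on `ℝ^n`, viewed as a continuous `m`-multilinear form. -/
abbrev Tensor (m n : ℕ) : Type := ContinuousMultilinearMap ℝ (fun _ : Fin m => Euc n) ℝ

/-- A tensor is symmetric if it is invariant under every permutation of its arguments. -/
def IsSymmTensor {m n : ℕ} (A : Tensor m n) : Prop :=
  ∀ (e : Equiv.Perm (Fin m)) (v : Fin m → Euc n), A (v ∘ e) = A v

/-- `A x^m`, the homogeneous form `A (x, …, x)`. -/
def tpow {m n : ℕ} (A : Tensor m n) (x : Euc n) : ℝ := A (fun _ => x)

/-- The last index of `Fin m`. -/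
def lastIdx {m : ℕ} (_hm : 2 ≤ m) : Fin m := ⟨m - 1, by omega⟩

/-- The second to last index of `Fin m`. -/
def sndIdx {m : ℕ} (_hm : 2 ≤ m) : Fin m := ⟨m - 2, by omega⟩

lemma sndIdx_ne_lastIdx {m : ℕ} (hm : 2 ≤ m) : sndIdx hm ≠ lastIdx hm := by
  simp only [sndIdx, lastIdx, Fin.mk.injEq, ne_eq]
  omega

/-- `A x^{m-1}`: the unique vector with `⟪A x^{m-1}, v⟫ = A (x, …, x, v)` for all `v`. -/
def tvec {m n : ℕ} (A : Tensor m n) (hm : 2 ≤ m) (x : Euc n) : Euc n :=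
  (InnerProductSpace.toDual ℝ (Euc n)).symm
    (A.toContinuousLinearMap (fun _ => x) (lastIdx hm))

/-- `F(x) = A x^{m-1} - (A x^m) • x`. -/
def Fvec {m n : ℕ} (A : Tensor m n) (hm : 2 ≤ m) (x : Euc n) : Euc n :=
  tvec A hm x - tpow A x • x

/-- `φ(x) = (1/m) A x^m`. -/
def phi {m n : ℕ} (A : Tensor m n) (x : Euc n) : ℝ := (1 / (m : ℝ)) * tpow A x

/-- Orthogonal projection `P_x d = d - ⟪x, d⟫ x` (for `x` a unit vector). -/
def Pproj {n : ℕ} (x d : Euc n) : Euc n := d - ⟪x, d⟫ • x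

/-- `x(α) = (x + α d)/‖x + α d‖`, the projection of `x + α d` onto the unit sphere. -/
def xcur {n : ℕ} (x d : Euc n) (α : ℝ) : Euc n := ‖x + α • d‖⁻¹ • (x + α • d)

/-- `w(x, d)`: the unique vector with `⟪w(x, d), v⟫ = A (x, …, x, d, v)` for all `v`. -/
def wvec {m n : ℕ} (A : Tensor m n) (hm : 2 ≤ m) (x d : Euc n) : Euc n :=
  (InnerProductSpace.toDual ℝ (Euc n)).symm
    (A.toContinuousLinearMap (Function.update (fun _ => x) (sndIdx hm) d) (lastIdx hm))

/-- `A (x, …, x, d, d)`. -/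
def A2 {m n : ℕ} (A : Tensor m n) (hm : 2 ≤ m) (x d : Euc n) : ℝ :=
  A (Function.update (Function.update (fun _ => x) (sndIdx hm) d) (lastIdx hm) d)

lemma wvec_add {m n : ℕ} (A : Tensor m n) (hm : 2 ≤ m) (x d₁ d₂ : Euc n) :
    wvec A hm x (d₁ + d₂) = wvec A hm x d₁ + wvec A hm x d₂ := by
  unfold wvec
  rw [← map_add]
  congr 1
  ext v
  simp only [ContinuousMultilinearMap.toContinuousLinearMap_apply, ContinuousLinearMap.add_apply]
  rw [Function.update_comm (sndIdx_ne_lastIdx hm), Function.update_comm (sndIdx_ne_lastIdx hm),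
    Function.update_comm (sndIdx_ne_lastIdx hm)]
  exact A.map_update_add _ _ _ _

lemma wvec_smul {m n : ℕ} (A : Tensor m n) (hm : 2 ≤ m) (x : Euc n) (c : ℝ) (d : Euc n) :
    wvec A hm x (c • d) = c • wvec A hm x d := by
  unfold wvec
  rw [← map_smul]
  congr 1
  ext v
  simp only [ContinuousMultilinearMap.toContinuousLinearMap_apply,
    ContinuousLinearMap.smul_apply, smul_eq_mul]
  rw [Function.update_comm (sndIdx_ne_lastIdx hm), Function.update_comm (sndIdx_ne_lastIdx hm)]
  exact A.map_update_smul _ _ _ _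

/-- The Jacobian `F'(x) d = (m-1) w(x,d) - (A x^m) d - m ⟪A x^{m-1}, d⟫ x`. -/
def FderivL {m n : ℕ} (A : Tensor m n) (hm : 2 ≤ m) (x : Euc n) : Euc n →L[ℝ] Euc n :=
  LinearMap.toContinuousLinearMap
  { toFun := fun d =>
      ((m : ℝ) - 1) • wvec A hm x d - tpow A x • d - ((m : ℝ) * ⟪tvec A hm x, d⟫) • x
    map_add' := by
      intro d₁ d₂
      try simp only
      rw [wvec_add, inner_add_right]
      module
    map_smul' := by
      intro c d
      simp only [RingHom.id_apply]
      rw [wvec_smul, inner_smul_right]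
      module }

/-- A Newton direction at `x`: `⟪x, d⟫ = 0` and `P_x (F'(x) d + F(x)) = 0`. -/
def NewtonDir {m n : ℕ} (A : Tensor m n) (hm : 2 ≤ m) (x d : Euc n) : Prop :=
  ⟪x, d⟫ = 0 ∧ Pproj x (FderivL A hm x d + Fvec A hm x) = 0

/-- The residual function `θ(x) = (1/2)‖F(x)‖²`. -/
def theta {m n : ℕ} (A : Tensor m n) (hm : 2 ≤ m) (x : Euc n) : ℝ :=
  (1 / 2) * ‖Fvec A hm x‖ ^ 2

/-- Assumption (A): second-order sufficient condition at the KKT point `x̄`. -/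
def AssumpA {m n : ℕ} (A : Tensor m n) (hm : 2 ≤ m) (xb : Euc n) (lam : ℝ) : Prop :=
  ‖xb‖ = 1 ∧ tvec A hm xb = lam • xb ∧ lam = tpow A xb ∧
    ∀ d : Euc n, d ≠ 0 → ⟪xb, d⟫ = 0 →
      0 < ((m : ℝ) - 1) * A2 A hm xb d - lam * ‖d‖ ^ 2

end


lemma inner_tvec' {m n : ℕ} (A : Tensor m n) (hm : 2 ≤ m) (x v : Euc n) :
    ⟪tvec A hm x, v⟫ = A (Function.update (fun _ => x) (lastIdx hm) v) := by
  unfold tvec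
  rw [InnerProductSpace.toDual_symm_apply]
  simp

lemma update_symm' {m n : ℕ} {A : Tensor m n} (hA : IsSymmTensor A) (hm : 2 ≤ m)
    (x v : Euc n) (i : Fin m) :
    A (Function.update (fun _ => x) i v) = A (Function.update (fun _ => x) (lastIdx hm) v) := by
  rcases eq_or_ne i (lastIdx hm) with rfl | hi
  · rfl
  · rw [← hA (Equiv.swap i (lastIdx hm)) (Function.update (fun _ => x) (lastIdx hm) v)]
    congr 1
    funext j
    simp only [Function.comp_apply]
    rcases eq_or_ne j i with rfl | hj
    · rw [Equiv.swap_apply_left, Function.update_self, Function.update_self]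
    · rw [Function.update_of_ne hj]
      rcases eq_or_ne j (lastIdx hm) with rfl | hj2
      · rw [Equiv.swap_apply_right, Function.update_of_ne hi]
      · rw [Equiv.swap_apply_of_ne_of_ne hj hj2, Function.update_of_ne hj2]

lemma linearDeriv_diag' {m n : ℕ} {A : Tensor m n} (hA : IsSymmTensor A) (hm : 2 ≤ m)
    (x v : Euc n) :
    A.linearDeriv (fun _ => x) (fun _ => v) = (m : ℝ) * ⟪tvec A hm x, v⟫ := by
  rw [ContinuousMultilinearMap.linearDeriv_apply]
  have h : ∀ i : Fin m, A (Function.update (fun _ => x) i v) = ⟪tvec A hm x, v⟫ := fun i => by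
    rw [update_symm' hA hm, inner_tvec']
  rw [Finset.sum_congr rfl (fun i _ => h i), Finset.sum_const, Finset.card_univ,
    Fintype.card_fin, nsmul_eq_mul]

/-- a direction with `⟪A x^{m-1}, P_x d⟫ < 0` is a curve descent direction of `φ`,
and the Armijo-type inequality holds for all sufficiently small `α > 0`. -/
theorem stmt2 {m n : ℕ} (hn : 1 ≤ n) (hm : 2 ≤ m) (A : Tensor m n) (hA : IsSymmTensor A)
    (x : Euc n) (hx : ‖x‖ = 1) (d : Euc n)
    (hd : ⟪tvec A hm x, Pproj x d⟫ < 0) (σ : ℝ) (hσ : σ ∈ Set.Ioo (0 : ℝ) 1) :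
    ∃ αbar > 0, ∀ α ∈ Set.Ioc (0 : ℝ) αbar,
      phi A (xcur x d α) ≤ phi A x + σ * α * ⟪tvec A hm x, Pproj x d⟫ ∧
      phi A (xcur x d α) < phi A x := by

  obtain ⟨hσ0, hσ1⟩ := hσ
  have hm0 : (m : ℝ) ≠ 0 := by positivity
  set L := (⟪tvec A hm x, Pproj x d⟫ : ℝ) with hLdef
  have hy0 : x + (0:ℝ) • d = x := by simp
  have hy : HasDerivAt (fun α : ℝ => x + α • d) d 0 := by
    simpa using ((hasDerivAt_id (0:ℝ)).smul_const d).const_add x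
  have hq : HasDerivAt (fun α : ℝ => (⟪x + α • d, x + α • d⟫ : ℝ)) (2 * ⟪x, d⟫) 0 := by
    have h := hy.inner ℝ hy
    rw [hy0] at h
    refine h.congr_deriv ?_
    rw [real_inner_comm d x]; ring
  have hq0 : (⟪x + (0:ℝ) • d, x + (0:ℝ) • d⟫ : ℝ) = 1 := by
    rw [hy0, real_inner_self_eq_norm_sq, hx]; norm_num
  have hsqrt : HasDerivAt (fun α : ℝ => ‖x + α • d‖) ⟪x, d⟫ 0 := by
    have h1 := (Real.hasDerivAt_sqrt
      (x := (⟪x + (0:ℝ) • d, x + (0:ℝ) • d⟫ : ℝ)) (by rw [hq0]; norm_num)).comp 0 hq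
    rw [hq0] at h1
    have h2 : (fun α : ℝ => Real.sqrt (⟪x + α • d, x + α • d⟫)) = fun α : ℝ => ‖x + α • d‖ := by
      funext α
      rw [real_inner_self_eq_norm_sq, Real.sqrt_sq (norm_nonneg _)]
    rw [show ((fun y : ℝ => Real.sqrt y) ∘ fun α : ℝ => (⟪x + α • d, x + α • d⟫ : ℝ))
        = fun α : ℝ => Real.sqrt (⟪x + α • d, x + α • d⟫) from rfl, h2] at h1
    refine h1.congr_deriv ?_
    rw [Real.sqrt_one]; ring
  have hn0 : ‖x + (0:ℝ) • d‖ = 1 := by rw [hy0, hx]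
  have hinv : HasDerivAt (fun α : ℝ => ‖x + α • d‖⁻¹) (-⟪x, d⟫) 0 := by
    have h := hsqrt.inv (by rw [hn0]; norm_num)
    rw [hn0] at h
    exact h.congr_deriv (by simp)
  have hcurve : HasDerivAt (fun α : ℝ => xcur x d α) (Pproj x d) 0 := by
    have h := hinv.smul hy
    rw [hy0, hx] at h
    unfold xcur
    refine h.congr_deriv ?_
    unfold Pproj
    rw [inv_one, one_smul, neg_smul, ← sub_eq_add_neg]
  have h0 : xcur x d 0 = x := by
    unfold xcur
    rw [hy0, hx, inv_one, one_smul]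
  have hdiag : HasFDerivAt (fun z : Euc n => tpow A z)
      ((A.linearDeriv (fun _ => x)).comp
        (ContinuousLinearMap.pi fun _ : Fin m => ContinuousLinearMap.id ℝ (Euc n))) x :=
    (A.hasFDerivAt (fun _ => x)).comp x
      ((ContinuousLinearMap.pi fun _ : Fin m => ContinuousLinearMap.id ℝ (Euc n)).hasFDerivAt)
  have htp : HasDerivAt (fun α : ℝ => tpow A (xcur x d α)) ((m : ℝ) * L) 0 := by
    rw [← h0] at hdiag
    have h := hdiag.comp_hasDerivAt 0 hcurve
    have heq : ((A.linearDeriv (fun _ => x)).comp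
        (ContinuousLinearMap.pi fun _ : Fin m => ContinuousLinearMap.id ℝ (Euc n))) (Pproj x d)
        = (m : ℝ) * L := by
      rw [ContinuousLinearMap.comp_apply]
      have : (ContinuousLinearMap.pi fun _ : Fin m => ContinuousLinearMap.id ℝ (Euc n))
          (Pproj x d) = fun _ => Pproj x d := rfl
      rw [this, linearDeriv_diag' hA hm]
    rw [h0] at h
    rw [heq] at h
    exact h
  have hphi : HasDerivAt (fun α : ℝ => phi A (xcur x d α)) L 0 := by
    have h := htp.const_mul (1 / (m : ℝ))
    unfold phi
    refine h.congr_deriv ?_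
    field_simp
  have hL0 : L < 0 := hd
  have hc : (0:ℝ) < (1 - σ) * (-L) := by nlinarith
  have hlo := (hasDerivAt_iff_isLittleO.mp hphi).def hc
  rw [Metric.eventually_nhds_iff] at hlo
  obtain ⟨ε, hε, hball⟩ := hlo
  refine ⟨ε / 2, by positivity, fun α hα => ?_⟩
  obtain ⟨hα0, hαε⟩ := hα
  have hdist : dist α 0 < ε := by
    rw [Real.dist_eq, sub_zero, abs_of_pos hα0]; linarith
  have hb := hball hdist
  rw [h0] at hb
  simp only [sub_zero, smul_eq_mul, Real.norm_eq_abs] at hb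
  rw [abs_of_pos hα0] at hb
  have hub := (abs_le.mp hb).2
  have hkey : phi A (xcur x d α) ≤ phi A x + σ * α * L := by nlinarith
  refine ⟨hkey, ?_⟩
  have hneg : σ * α * L < 0 := by
    have := mul_pos (mul_pos hσ0 hα0) (neg_pos.mpr hL0)
    nlinarith
  linarith
end

section
/- Let x̄ ∈ E and λ̄ ∈ ℝ. The following two conditions are equivalent: (a) x̄ ∈ 𝔹, A x̄^{m-1} = λ̄ x̄, and for every nonzero d ∈ E with ⟪x̄, d⟫ = 0 one has (m−1) · A(x̄, …, x̄, d, d) − λ̄ ‖d‖² > 0 (x̄ is a KKT point of the sphere-constrained minimization of φ with multiplier λ̄ satisfying the second-order sufficient condition); (b) x̄ ∈ 𝔹, F(x̄) = 0, λ̄ = A x̄^m, and for every nonzero d ∈ E with ⟪x̄, d⟫ = 0 one has ⟪d, F′(x̄) d⟫ > 0 (the quadratic form of F′(x̄) restricted to the orthogonal complement of x̄ is positive definite). -/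
open scoped RealInnerProductSpace

lemma inner_tvec_self {m n : ℕ} (A : Tensor m n) (hm : 2 ≤ m) (x : Euc n) :
    ⟪tvec A hm x, x⟫ = tpow A x := by
  rw [inner_tvec']
  simp [tpow, Function.update_eq_self]

lemma inner_wvec' {m n : ℕ} (A : Tensor m n) (hm : 2 ≤ m) (x d : Euc n) :
    ⟪wvec A hm x d, d⟫ = A2 A hm x d := by
  rw [wvec, InnerProductSpace.toDual_symm_apply]
  rfl

lemma fderivL_apply {m n : ℕ} (A : Tensor m n) (hm : 2 ≤ m) (x d : Euc n) :
    FderivL A hm x d =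
      ((m : ℝ) - 1) • wvec A hm x d - tpow A x • d - ((m : ℝ) * ⟪tvec A hm x, d⟫) • x := rfl

lemma key_inner {m n : ℕ} (A : Tensor m n) (hm : 2 ≤ m) (xb : Euc n)
    (htv : tvec A hm xb = tpow A xb • xb) (d : Euc n) (hxd : ⟪xb, d⟫ = 0) :
    ⟪d, FderivL A hm xb d⟫ = ((m : ℝ) - 1) * A2 A hm xb d - tpow A xb * ‖d‖ ^ 2 := by
  have hdx : ⟪d, xb⟫ = 0 := by rw [real_inner_comm]; exact hxd
  rw [fderivL_apply, inner_sub_right, inner_sub_right, inner_smul_right, inner_smul_right,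
    inner_smul_right, htv, real_inner_smul_left, real_inner_self_eq_norm_sq, hdx, hxd]
  have hw : ⟪d, wvec A hm xb d⟫ = A2 A hm xb d := by
    rw [real_inner_comm]; exact inner_wvec' A hm xb d
  rw [hw]; ring

/-- equivalence of the second-order sufficient KKT condition (a) with the
positive definiteness of `F'(x̄)` on the orthogonal complement of `x̄` (b). -/
theorem stmt5 {m n : ℕ} (hn : 1 ≤ n) (hm : 2 ≤ m) (A : Tensor m n) (hA : IsSymmTensor A)
    (xb : Euc n) (lam : ℝ) :
    (‖xb‖ = 1 ∧ tvec A hm xb = lam • xb ∧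
      ∀ d : Euc n, d ≠ 0 → ⟪xb, d⟫ = 0 →
        0 < ((m : ℝ) - 1) * A2 A hm xb d - lam * ‖d‖ ^ 2) ↔
    (‖xb‖ = 1 ∧ Fvec A hm xb = 0 ∧ lam = tpow A xb ∧
      ∀ d : Euc n, d ≠ 0 → ⟪xb, d⟫ = 0 → 0 < ⟪d, FderivL A hm xb d⟫) := by
  constructor
  · rintro ⟨h1, h2, h3⟩
    have hlam : lam = tpow A xb := by
      have h := inner_tvec_self A hm xb
      rw [h2, real_inner_smul_left, real_inner_self_eq_norm_sq, h1] at h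
      simpa using h
    have htv : tvec A hm xb = tpow A xb • xb := by rw [h2, hlam]
    refine ⟨h1, ?_, hlam, ?_⟩
    · rw [Fvec, htv, sub_self]
    · intro d hd hxd
      rw [key_inner A hm xb htv d hxd, ← hlam]
      exact h3 d hd hxd
  · rintro ⟨h1, hF, hlam, h4⟩
    have htv : tvec A hm xb = tpow A xb • xb := by
      have := sub_eq_zero.mp hF
      simpa [Fvec, sub_eq_zero] using hF
    refine ⟨h1, by rw [htv, ← hlam], ?_⟩
    intro d hd hxd
    have := h4 d hd hxd
    rw [key_inner A hm xb htv d hxd, ← hlam] at this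
    exact this
end

section
/- Let x ∈ 𝔹 be such that ⟪d, F′(x) d⟫ > 0 for every nonzero d ∈ E with ⟪x, d⟫ = 0. Then the Newton system at x has exactly one solution: there exists a unique d ∈ E with ⟪x, d⟫ = 0 and P_x(F′(x) d + F(x)) = 0. -/
open scoped RealInnerProductSpace

/-- if the quadratic form of `F'(x)` is positive definite on `x^⊥`, then the
Newton system at `x` has a unique solution. -/
theorem stmt7 {m n : ℕ} (hn : 1 ≤ n) (hm : 2 ≤ m) (A : Tensor m n) (hA : IsSymmTensor A)
    (x : Euc n) (hx : ‖x‖ = 1)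
    (hpd : ∀ d : Euc n, d ≠ 0 → ⟪x, d⟫ = 0 → 0 < ⟪d, FderivL A hm x d⟫) :
    ∃! d : Euc n, ⟪x, d⟫ = 0 ∧ Pproj x (FderivL A hm x d + Fvec A hm x) = 0 := by
  classical
  have hxx : ⟪x, x⟫ = 1 := by
    rw [real_inner_self_eq_norm_sq, hx]; norm_num
  set T := FderivL A hm x with hT
  have hP : ∀ y : Euc n, ⟪x, Pproj x y⟫ = 0 := by
    intro y
    simp [Pproj, inner_sub_right, inner_smul_right, hxx, hx]
  have hdP : ∀ d y : Euc n, ⟪x, d⟫ = 0 → ⟪d, Pproj x y⟫ = ⟪d, y⟫ := by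
    intro d y hd
    have hdx : ⟪d, x⟫ = (0 : ℝ) := by rw [real_inner_comm]; exact hd
    rw [Pproj, inner_sub_right, real_inner_smul_right, hdx, mul_zero, sub_zero]
  have hPadd : ∀ a b : Euc n, Pproj x (a + b) = Pproj x a + Pproj x b := by
    intro a b; simp only [Pproj, inner_add_right]; module
  have hPsmul : ∀ (c : ℝ) (a : Euc n), Pproj x (c • a) = c • Pproj x a := by
    intro c a; simp only [Pproj, inner_smul_right]; module
  set K := (ℝ ∙ x)ᗮ with hK
  have hmemK : ∀ y : Euc n, y ∈ K ↔ ⟪x, y⟫ = 0 := fun y =>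
    Submodule.mem_orthogonal_singleton_iff_inner_right
  let L : K →ₗ[ℝ] K :=
    { toFun := fun d => ⟨Pproj x (T d), (hmemK _).2 (hP _)⟩
      map_add' := by
        intro a b; apply Subtype.ext
        show Pproj x (T ((a : Euc n) + b)) = Pproj x (T a) + Pproj x (T b)
        rw [map_add, hPadd]
      map_smul' := by
        intro c a; apply Subtype.ext
        show Pproj x (T (c • (a : Euc n))) = c • Pproj x (T a)
        rw [map_smul, hPsmul] }
  have hker : ∀ d : K, L d = 0 → d = 0 := by
    intro d hd
    by_contra hne
    have hd0 : (d : Euc n) ≠ 0 := fun h => hne (Subtype.ext h)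
    have hdx : ⟪x, (d : Euc n)⟫ = 0 := (hmemK _).1 d.2
    have hpos := hpd d hd0 hdx
    have h0 : ⟪(d : Euc n), T d⟫ = 0 := by
      have hz : Pproj x (T (d : Euc n)) = 0 := congrArg Subtype.val hd
      rw [← hdP d (T d) hdx, hz, inner_zero_right]
    linarith
  have hinj : Function.Injective L :=
    LinearMap.ker_eq_bot.mp (LinearMap.ker_eq_bot'.mpr hker)
  have hsurj : Function.Surjective L := LinearMap.injective_iff_surjective.mp hinj
  have hbmem : -Pproj x (Fvec A hm x) ∈ K := by
    rw [hmemK, inner_neg_right, hP, neg_zero]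
  obtain ⟨d, hdL⟩ := hsurj ⟨-Pproj x (Fvec A hm x), hbmem⟩
  refine ⟨(d : Euc n), ⟨(hmemK _).1 d.2, ?_⟩, ?_⟩
  · have h1 : Pproj x (T (d : Euc n)) = -Pproj x (Fvec A hm x) :=
      congrArg Subtype.val hdL
    rw [hPadd, h1, neg_add_cancel]
  · rintro e ⟨hex, he⟩
    have heK : e ∈ K := (hmemK _).2 hex
    have h2 : L ⟨e, heK⟩ = ⟨-Pproj x (Fvec A hm x), hbmem⟩ := by
      apply Subtype.ext
      show Pproj x (T e) = -Pproj x (Fvec A hm x)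
      have := he
      rw [hPadd] at this
      linear_combination (norm := abel) this
    have := hinj (h2.trans hdL.symm)
    exact congrArg Subtype.val this
end
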